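/- Let K be a continuous symmetric kernel on a simple closed continuous curve γ : [0,b] → ℂ extended periodically with period b, such that for each fixed t, the function τ ↦ K(γ(τ), γ(t)) is strictly convex on [t, t+b]. Let A be a compact subset of the curve whose outer boundary S is contained in γ([0,b]), and let λ be the equilibrium measure on A for K (so supp λ ⊆ S, with potential W^λ ≥ V on A and W^λ ≤ V on supp λ, where V is the energy of λ). Then supp λ = S. -/

import Mathlib

open MeasureTheory

/-- The topological support of a measure: points all of whose neighborhoods
have positive measure. -/
def msupport (μ : Measure ℂ) : Set ℂ := {x | ∀ U ∈ nhds x, 0 < μ U}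

lemma msupport_compl_null (μ : Measure ℂ) : μ (msupport μ)ᶜ = 0 := by
  apply measure_null_of_locally_null
  intro x hx
  simp only [msupport, Set.mem_compl_iff, Set.mem_setOf_eq, not_forall] at hx
  obtain ⟨U, hU, hU0⟩ := hx
  exact ⟨U, mem_nhdsWithin_of_mem_nhds hU, by simpa [not_lt, le_zero_iff] using hU0⟩

lemma msupport_closed (μ : Measure ℂ) : IsClosed (msupport μ) := by
  rw [← isOpen_compl_iff, isOpen_iff_mem_nhds]
  intro x hx
  simp only [msupport, Set.mem_compl_iff, Set.mem_setOf_eq, not_forall] at hx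
  obtain ⟨U, hU, hU0⟩ := hx
  have hU0' : μ U = 0 := by simpa [not_lt, le_zero_iff] using hU0
  refine Filter.mem_of_superset (interior_mem_nhds.mpr hU) ?_
  intro y hy hy'
  have : 0 < μ U := hy' U (mem_interior_iff_mem_nhds.mp hy)
  simp [hU0'] at this

lemma msupport_nonempty (μ : Measure ℂ) [IsProbabilityMeasure μ] :
    (msupport μ).Nonempty := by
  by_contra h
  rw [Set.not_nonempty_iff_eq_empty] at h
  have huniv : μ Set.univ = 0 := by
    apply measure_null_of_locally_null
    intro x _
    have hx : x ∉ msupport μ := by simp [h]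
    simp only [msupport, Set.mem_setOf_eq, not_forall] at hx
    obtain ⟨U, hU, hU0⟩ := hx
    exact ⟨U, mem_nhdsWithin_of_mem_nhds hU, by simpa [not_lt, le_zero_iff] using hU0⟩
  simp [measure_univ] at huniv

lemma per_int {γ : ℝ → ℂ} {b : ℝ} (hper : ∀ t, γ (t + b) = γ t) (k : ℤ) (t : ℝ) :
    γ (t + k * b) = γ t := by
  induction k using Int.induction_on with
  | zero => simp
  | succ i ih =>
      have h1 : t + ((i : ℤ) + 1 : ℤ) * b = (t + (i : ℤ) * b) + b := by push_cast; ring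
      rw [h1, hper, ih]
  | pred i ih =>
      have h1 : t + (-(i : ℤ) - 1 : ℤ) * b + b = t + (-(i : ℤ) : ℤ) * b := by push_cast; ring
      rw [← ih, ← h1, hper]

lemma shift_into {b : ℝ} (hb : 0 < b) (s r : ℝ) :
    ∃ k : ℤ, s + k * b ∈ Set.Ico r (r + b) := by
  refine ⟨⌈(r - s) / b⌉, ?_, ?_⟩
  · have h1 : (r - s) / b ≤ (⌈(r - s) / b⌉ : ℝ) := Int.le_ceil _
    have h2 := mul_le_mul_of_nonneg_right h1 hb.le
    rw [div_mul_cancel₀ _ hb.ne'] at h2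
    linarith
  · have h1 : ((⌈(r - s) / b⌉ : ℤ) : ℝ) < (r - s) / b + 1 := Int.ceil_lt_add_one _
    have h2 := mul_lt_mul_of_pos_right h1 hb
    rw [add_mul, div_mul_cancel₀ _ hb.ne'] at h2
    linarith

theorem closed_curve_full_support (K : ℂ → ℂ → ℝ) (b : ℝ) (hb : 0 < b) (γ : ℝ → ℂ)
    (hγc : Continuous γ) (hper : ∀ t, γ (t + b) = γ t)
    (hsimple : ∀ t₁ ∈ Set.Ico (0:ℝ) b, ∀ t₂ ∈ Set.Ico (0:ℝ) b, γ t₁ = γ t₂ → t₁ = t₂)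
    (hKc : Continuous fun p : ℂ × ℂ => K p.1 p.2)
    (hKsym : ∀ z w, K z w = K w z)
    (hconv : ∀ t : ℝ, StrictConvexOn ℝ (Set.Icc t (t + b)) fun τ => K (γ τ) (γ t))
    (A S : Set ℂ) (hA : IsCompact A) (hSA : S ⊆ A) (hS : S ⊆ γ '' Set.Icc 0 b)
    (lam : Measure ℂ) [IsProbabilityMeasure lam] (hsupp : msupport lam ⊆ S)
    (V : ℝ) (hV : V = ∫ z, ∫ w, K z w ∂lam ∂lam)
    (W : ℂ → ℝ) (hW : ∀ z, W z = ∫ w, K z w ∂lam)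
    (h1 : ∀ z ∈ A, V ≤ W z) (h2 : ∀ z ∈ msupport lam, W z ≤ V) :
    msupport lam = S := by
  refine Set.Subset.antisymm hsupp ?_
  intro z₀ hz₀S
  by_contra hz₀
  have hnull : lam (msupport lam)ᶜ = 0 := msupport_compl_null lam
  have hclosed : IsClosed (msupport lam) := msupport_closed lam
  have hne : (msupport lam).Nonempty := msupport_nonempty lam
  have hKcont : ∀ x : ℂ, Continuous fun w => K x w := fun x =>
    hKc.comp (Continuous.prodMk_right x)
  have hcomp : IsCompact (msupport lam) :=
    hA.of_isClosed_subset hclosed (fun x hx => hSA (hsupp hx))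
  have hint : ∀ x : ℂ, Integrable (fun w => K x w) lam := by
    intro x
    have hi1 : IntegrableOn (fun w => K x w) (msupport lam) lam :=
      ((hKcont x).continuousOn).integrableOn_compact hcomp
    have hi2 : IntegrableOn (fun w => K x w) (msupport lam)ᶜ lam := by
      rw [IntegrableOn, Measure.restrict_eq_zero.mpr hnull]
      exact integrable_zero_measure
    have := hi1.union hi2
    rwa [Set.union_compl_self, integrableOn_univ] at this
  have hae : ∀ᵐ w ∂lam, w ∈ msupport lam := by
    rw [ae_iff]; exact hnull
  obtain ⟨t₀, ht₀mem, ht₀⟩ := hS hz₀S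
  set P : Set ℝ := γ ⁻¹' (msupport lam) with hP
  have hPclosed : IsClosed P := hclosed.preimage hγc
  have hγint : ∀ (k : ℤ) t, γ (t + k * b) = γ t := per_int hper
  have ht₀P : t₀ ∉ P := by
    simp only [hP, Set.mem_preimage, ht₀]
    exact hz₀
  have hwin : ∀ w ∈ msupport lam, ∀ r : ℝ, ∃ t ∈ Set.Ico r (r + b), γ t = w := by
    intro w hw r
    obtain ⟨s, _, hsw⟩ := hS (hsupp hw)
    obtain ⟨k, hk⟩ := shift_into hb s r
    exact ⟨s + k * b, hk, by rw [hγint, hsw]⟩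
  -- the left endpoint α
  set Q := P ∩ Set.Icc (t₀ - b) t₀ with hQ
  have hQne : Q.Nonempty := by
    obtain ⟨x, hx⟩ := hne
    obtain ⟨t, ht, htx⟩ := hwin x hx (t₀ - b)
    exact ⟨t, by rw [hP, Set.mem_preimage, htx]; exact hx,
      ⟨ht.1, by have := ht.2; linarith⟩⟩
  have hQcomp : IsCompact Q := isCompact_Icc.inter_left hPclosed
  set α := sSup Q with hα
  have hαQ : α ∈ Q := hQcomp.sSup_mem hQne
  have hαP : α ∈ P := hαQ.1
  have hα1 : t₀ - b ≤ α := hαQ.2.1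
  have hα2 : α < t₀ := lt_of_le_of_ne hαQ.2.2 (fun h => ht₀P (h ▸ hαP))
  -- the right endpoint β
  set Q' := P ∩ Set.Icc t₀ (t₀ + b) with hQ'
  have hQ'ne : Q'.Nonempty := by
    obtain ⟨x, hx⟩ := hne
    obtain ⟨t, ht, htx⟩ := hwin x hx t₀
    exact ⟨t, by rw [hP, Set.mem_preimage, htx]; exact hx, ⟨ht.1, ht.2.le⟩⟩
  have hQ'comp : IsCompact Q' := isCompact_Icc.inter_left hPclosed
  set β := sInf Q' with hβ
  have hβQ : β ∈ Q' := hQ'comp.sInf_mem hQ'ne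
  have hβP : β ∈ P := hβQ.1
  have hβ2 : β ≤ t₀ + b := hβQ.2.2
  have hβ1 : t₀ < β := lt_of_le_of_ne hβQ.2.1 (fun h => ht₀P (h ▸ hβP))
  have hαβ : α < β := hα2.trans hβ1
  -- β ≤ α + b
  have hαbP : α + b ∈ P := by
    show γ (α + b) ∈ msupport lam
    rw [hper]; exact hαP
  have hβα : β ≤ α + b :=
    csInf_le hQ'comp.bddBelow ⟨hαbP, ⟨by linarith, by linarith⟩⟩
  -- no support parameters strictly between α and β
  have hgap : ∀ t ∈ Set.Ioo α β, t ∉ P := by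
    intro t ht htP
    rcases le_or_gt t t₀ with h | h
    · have htQ : t ∈ Q := ⟨htP, ⟨by linarith [ht.1], h⟩⟩
      have := le_csSup hQcomp.bddAbove htQ
      linarith [ht.1]
    · have htQ' : t ∈ Q' := ⟨htP, ⟨h.le, by linarith [ht.2]⟩⟩
      have := csInf_le hQ'comp.bddBelow htQ'
      linarith [ht.2]
  -- every support point has a parameter in [β - b, α]
  have hkey : ∀ w ∈ msupport lam, ∃ t, γ t = w ∧ t ∈ Set.Icc (β - b) α := by
    intro w hw
    obtain ⟨t, ht, htw⟩ := hwin w hw (β - b)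
    have htP : t ∈ P := by rw [hP, Set.mem_preimage, htw]; exact hw
    refine ⟨t, htw, ht.1, ?_⟩
    by_contra hta
    push_neg at hta
    exact hgap t ⟨hta, by have := ht.2; linarith⟩ htP
  -- convex combination
  have hden : (0:ℝ) < β - α := by linarith
  set c := (β - t₀) / (β - α) with hc
  set d := (t₀ - α) / (β - α) with hd
  have hcpos : 0 < c := div_pos (by linarith) hden
  have hdpos : 0 < d := div_pos (by linarith) hden
  have hcd : c + d = 1 := by
    rw [hc, hd, ← add_div, div_eq_one_iff_eq hden.ne']; ring
  have hcomb : c * α + d * β = t₀ := by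
    rw [hc, hd]; field_simp; ring
  -- pointwise strict convexity inequality
  have hpt : ∀ w ∈ msupport lam,
      K (γ t₀) w < c * K (γ α) w + d * K (γ β) w := by
    intro w hw
    obtain ⟨t, htw, ht1, ht2⟩ := hkey w hw
    have hαm : α ∈ Set.Icc t (t + b) := ⟨ht2, by linarith⟩
    have hβm : β ∈ Set.Icc t (t + b) := ⟨by linarith, by linarith⟩
    have hcv := (hconv t).2 hαm hβm (ne_of_lt hαβ) hcpos hdpos hcd
    have h' : K (γ (c * α + d * β)) (γ t) <
        c * K (γ α) (γ t) + d * K (γ β) (γ t) := by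
      simpa [smul_eq_mul] using hcv
    rw [hcomb, htw] at h'
    exact h'
  -- integrate
  set f := fun w => c * K (γ α) w + d * K (γ β) w - K (γ t₀) w with hf
  have hfint : Integrable f lam :=
    (((hint _).const_mul c).add ((hint _).const_mul d)).sub (hint _)
  have hfnn : 0 ≤ᵐ[lam] f := by
    filter_upwards [hae] with w hw
    have := hpt w hw
    simp only [hf, Pi.zero_apply]
    linarith
  have hfcont : Continuous f := by
    exact ((continuous_const.mul (hKcont _)).add
      (continuous_const.mul (hKcont _))).sub (hKcont _)
  have hpos : 0 < ∫ w, f w ∂lam := by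
    rw [integral_pos_iff_support_of_nonneg_ae hfnn hfint]
    obtain ⟨x, hx⟩ := hne
    have hOopen : IsOpen {w | 0 < f w} := isOpen_lt continuous_const hfcont
    have hxO : x ∈ {w | 0 < f w} := by
      have := hpt x hx
      simp only [Set.mem_setOf_eq, hf]
      linarith
    have hOU : 0 < lam {w | 0 < f w} := hx _ (hOopen.mem_nhds hxO)
    refine lt_of_lt_of_le hOU (measure_mono ?_)
    intro w hw
    exact ne_of_gt hw
  have hA1 := (hint (γ α)).const_mul c
  have hB1 := (hint (γ β)).const_mul d
  have hsplit : ∫ w, f w ∂lam = c * W (γ α) + d * W (γ β) - W (γ t₀) := by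
    have hadd : Integrable (fun w => c * K (γ α) w + d * K (γ β) w) lam :=
      hA1.add hB1
    have e0 : ∫ w, f w ∂lam =
        ∫ w, (c * K (γ α) w + d * K (γ β) w) - K (γ t₀) w ∂lam := rfl
    rw [e0, integral_sub hadd (hint _), integral_add hA1 hB1,
      integral_const_mul, integral_const_mul, hW, hW, hW]
  have hWα : W (γ α) ≤ V := h2 _ hαP
  have hWβ : W (γ β) ≤ V := h2 _ hβP
  have hWt₀ : V ≤ W (γ t₀) := by rw [ht₀]; exact h1 z₀ (hSA hz₀S)
  rw [hsplit] at hpos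
  have hV' : c * V + d * V = V := by rw [← add_mul, hcd, one_mul]
  linarith [mul_le_mul_of_nonneg_left hWα hcpos.le,
    mul_le_mul_of_nonneg_left hWβ hdpos.le]
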